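/- For all n ≥ 1 and k ≥ 2, t(n,k,1) = ∑_{λ ⊢ n} (-1)^{l(λ)+1} g_λ ∏_{i=1}^{l(λ)} t(λ_i, k-1, 1), where the sum is over all integer partitions λ of n. -/

import Mathlib

open Finset

/-- Stirling numbers of the second kind: the number of partitions (equivalence
relations) of an `n`-element set into `r` nonempty blocks. -/
noncomputable def stirS2 (n r : ℕ) : ℕ :=
  Nat.card {p : Setoid (Fin n) // Nat.card (Quotient p) = r}

/-- Signed Stirling numbers of the first kind, defined by
`x(x-1)⋯(x-n+1) = ∑_{r=0}^{n} s(n,r) xʳ`. -/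
noncomputable def stirS1 (n r : ℕ) : ℤ :=
  (∏ i ∈ Finset.range n, (Polynomial.X - Polynomial.C (i : ℤ))).coeff r

/-- `Tnum n k r = T(n,k,r) = ∑_{n ≥ i_1 ≥ … ≥ i_{k-1} ≥ r} ∏_{j=1}^{k} S(i_{j-1}, i_j)`
(with `i_0 = n`, `i_k = r`), written via the equivalent recursion on `k`. -/
noncomputable def Tnum : ℕ → ℕ → ℕ → ℕ
  | n, 0, r => if n = r then 1 else 0
  | n, k + 1, r => ∑ m ∈ Finset.Icc r n, stirS2 n m * Tnum m k r

/-- `tnum n k r = t(n,k,r) = ∑_{n ≥ i_1 ≥ … ≥ i_{k-1} ≥ r} ∏_{j=1}^{k} s(i_{j-1}, i_j)`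
(with `i_0 = n`, `i_k = r`), written via the equivalent recursion on `k`. -/
noncomputable def tnum : ℕ → ℕ → ℕ → ℤ
  | n, 0, r => if n = r then 1 else 0
  | n, k + 1, r => ∑ m ∈ Finset.Icc r n, stirS1 n m * tnum m k r

/-- `f_λ = n! / (∏_j (j!)^{m_j} · m_j!)` where `m_j` is the multiplicity of the
part `j` in the integer partition `λ` of `n`. -/
noncomputable def fPart (n : ℕ) (P : Nat.Partition n) : ℚ :=
  (n.factorial : ℚ) /
    ∏ j ∈ Finset.range (n + 1),
      ((j.factorial : ℚ) ^ (P.parts.count j) * ((P.parts.count j).factorial : ℚ))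

/-- `g_λ = (l(λ) - 1)! · f_λ`. -/
noncomputable def gPart (n : ℕ) (P : Nat.Partition n) : ℚ :=
  ((Multiset.card P.parts - 1).factorial : ℚ) * fPart n P


open PowerSeries

lemma stirS1_zero_left (r : ℕ) : stirS1 0 r = if r = 0 then 1 else 0 := by
  simp [stirS1, Polynomial.coeff_one]

lemma stirS1_succ (n r : ℕ) :
    stirS1 (n+1) (r+1) = stirS1 n r - n * stirS1 n (r+1) := by
  unfold stirS1
  rw [Finset.prod_range_succ, mul_sub, Polynomial.coeff_sub, Polynomial.coeff_mul_X,
    Polynomial.coeff_mul_C]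
  ring

lemma stirS1_zero_right (n : ℕ) : stirS1 (n+1) 0 = 0 := by
  unfold stirS1
  rw [Polynomial.coeff_zero_eq_eval_zero, Polynomial.eval_prod]
  apply Finset.prod_eq_zero (Finset.mem_range.2 (Nat.succ_pos n))
  simp

lemma stirS1_eq_zero_of_lt {n r : ℕ} (h : n < r) : stirS1 n r = 0 := by
  unfold stirS1
  apply Polynomial.coeff_eq_zero_of_natDegree_lt
  calc (∏ i ∈ Finset.range n, (Polynomial.X - Polynomial.C (i : ℤ))).natDegree
      ≤ ∑ i ∈ Finset.range n, (Polynomial.X - Polynomial.C (i : ℤ)).natDegree :=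
        Polynomial.natDegree_prod_le _ _
    _ ≤ ∑ _i ∈ Finset.range n, 1 := by
        apply Finset.sum_le_sum; intro i _; exact le_of_eq (Polynomial.natDegree_X_sub_C _)
    _ = n := by simp
    _ < r := h

lemma stirS1_one : ∀ n : ℕ, stirS1 (n+1) 1 = (-1)^n * n.factorial := by
  intro n
  induction n with
  | zero => simp [stirS1]
  | succ n ih =>
      have h := stirS1_succ (n+1) 0
      rw [stirS1_zero_right] at h
      rw [h, ih, Nat.factorial_succ]
      push_cast
      ring

noncomputable def Lf : ℚ⟦X⟧ := PowerSeries.mk fun n => (stirS1 n 1 : ℚ) / n.factorial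

lemma coeff_X_mul_deriv (f : ℚ⟦X⟧) (n : ℕ) :
    PowerSeries.coeff n (PowerSeries.X * d⁄dX ℚ f) = n * PowerSeries.coeff n f := by
  cases n with
  | zero => simp
  | succ n => rw [PowerSeries.coeff_succ_X_mul, PowerSeries.coeff_derivative]; push_cast; ring

lemma one_add_X_mul_deriv_Lf : (1 + PowerSeries.X) * d⁄dX ℚ Lf = 1 := by
  ext n
  rw [add_mul, one_mul, map_add, coeff_X_mul_deriv, PowerSeries.coeff_derivative]
  cases n with
  | zero => simp [Lf, stirS1_one 0]
  | succ n =>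
      rw [PowerSeries.coeff_one, if_neg (Nat.succ_ne_zero n)]
      simp only [Lf, PowerSeries.coeff_mk]
      have e1 : ((stirS1 (n+1+1) 1 : ℚ)) = (-1)^(n+1) * (n+1).factorial := by
        exact_mod_cast congrArg (Int.cast : ℤ → ℚ) (stirS1_one (n+1))
      have e2 : ((stirS1 (n+1) 1 : ℚ)) = (-1)^n * n.factorial := by
        exact_mod_cast congrArg (Int.cast : ℤ → ℚ) (stirS1_one n)
      have h2 : ((n+1+1).factorial : ℚ) = ((n:ℚ)+1+1) * (n+1).factorial := by
        rw [Nat.factorial_succ]; push_cast; ring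
      have h2' : ((n+1).factorial : ℚ) = ((n:ℚ)+1) * n.factorial := by
        rw [Nat.factorial_succ]; push_cast; ring
      have h3 : (n.factorial : ℚ) ≠ 0 := Nat.cast_ne_zero.2 (Nat.factorial_ne_zero _)
      rw [e1, e2, h2, h2']
      push_cast
      field_simp
      ring

lemma one_add_X_mul_deriv_Lf_pow (m : ℕ) :
    (1 + PowerSeries.X) * d⁄dX ℚ (Lf ^ (m+1)) = (m+1 : ℕ) • Lf ^ m := by
  rw [Derivation.leibniz_pow, Nat.succ_sub_one, smul_eq_mul, mul_smul_comm,
    show (1+PowerSeries.X)*(Lf^m * d⁄dX ℚ Lf) = Lf^m * ((1+PowerSeries.X) * d⁄dX ℚ Lf) by ring,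
    one_add_X_mul_deriv_Lf, mul_one]

lemma coeff_Lf_pow (m : ℕ) : ∀ n : ℕ,
    (n.factorial : ℚ) * PowerSeries.coeff n (Lf ^ m) = m.factorial * stirS1 n m := by
  induction m with
  | zero =>
      intro n
      cases n with
      | zero => simp [stirS1_zero_left]
      | succ n =>
          rw [pow_zero, PowerSeries.coeff_one, if_neg (Nat.succ_ne_zero n)]
          have : stirS1 (n+1) 0 = 0 := stirS1_zero_right n
          simp [this]
  | succ m ih =>
      intro n
      induction n with
      | zero =>
          rw [show ((PowerSeries.coeff 0) (Lf ^ (m+1))) = (PowerSeries.constantCoeff (Lf ^ (m+1))) by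
              rw [← PowerSeries.coeff_zero_eq_constantCoeff],
            map_pow]
          have : PowerSeries.constantCoeff Lf = 0 := by
            rw [← PowerSeries.coeff_zero_eq_constantCoeff]
            simp [Lf, stirS1_zero_left]
          rw [this, zero_pow (Nat.succ_ne_zero m)]
          have : stirS1 0 (m+1) = 0 := by rw [stirS1_zero_left]; simp
          simp [this]
      | succ n ihn =>
          have R := congrArg (PowerSeries.coeff n) (one_add_X_mul_deriv_Lf_pow m)
          rw [add_mul, one_mul, map_add, coeff_X_mul_deriv, PowerSeries.coeff_derivative,
            map_nsmul] at R
          rw [nsmul_eq_mul] at R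
          have hrec : ((stirS1 (n+1) (m+1) : ℚ)) = (stirS1 n m : ℚ) - n * stirS1 n (m+1) := by
            exact_mod_cast congrArg (Int.cast : ℤ → ℚ) (stirS1_succ n m)
          have h2 : ((n+1).factorial : ℚ) = ((n:ℚ)+1) * n.factorial := by
            rw [Nat.factorial_succ]; push_cast; ring
          have h3 : ((m+1).factorial : ℚ) = ((m:ℚ)+1) * m.factorial := by
            rw [Nat.factorial_succ]; push_cast; ring
          have ihm := ih n
          rw [h3] at ihn
          rw [h2, h3, hrec]
          push_cast at R ⊢
          linear_combination (n.factorial : ℚ) * R + ((m:ℚ)+1) * ihm - (n:ℚ) * ihn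

lemma coeff_Lf_pow_eq_zero {n m : ℕ} (h : n < m) : PowerSeries.coeff n (Lf^m) = 0 := by
  have h1 := coeff_Lf_pow m n
  rw [stirS1_eq_zero_of_lt h] at h1
  have h3 : (n.factorial : ℚ) ≠ 0 := Nat.cast_ne_zero.2 (Nat.factorial_ne_zero _)
  rw [Int.cast_zero, mul_zero] at h1
  exact (mul_eq_zero.1 h1).resolve_left h3

lemma coeff_pow_eq_zero {U : ℚ⟦X⟧} (hU : PowerSeries.constantCoeff U = 0)
    {n l : ℕ} (h : n < l) : PowerSeries.coeff n (U^l) = 0 := by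
  obtain ⟨V, rfl⟩ := PowerSeries.X_dvd_iff.2 hU
  rw [mul_pow, PowerSeries.coeff_mul]
  apply Finset.sum_eq_zero
  intro p hp
  have h1 : p.1 ≤ n := Finset.HasAntidiagonal.antidiagonal.fst_le hp
  rw [PowerSeries.coeff_X_pow, if_neg (by omega), zero_mul]

/-- generic reindexing of sums over pairs with bounded total. -/
lemma sum_antidiag_range (n : ℕ) (F : ℕ → ℕ → ℚ) (hF : ∀ i j, n < i + j → F i j = 0) :
    ∑ m ∈ range (n+1), ∑ q ∈ antidiagonal m, F q.1 q.2
      = ∑ i ∈ range (n+1), ∑ j ∈ range (n+1), F i j := by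
  rw [Finset.sum_sigma' (range (n+1)) (fun m => antidiagonal m) (fun _ q => F q.1 q.2)]
  rw [← Finset.sum_product' (s := range (n+1)) (t := range (n+1)) (f := fun i j => F i j)]
  rw [← Finset.sum_filter_add_sum_filter_not (range (n+1) ×ˢ range (n+1))
    (fun q => q.1 + q.2 ≤ n) (fun q => F q.1 q.2)]
  have h0 : ∑ q ∈ (range (n+1) ×ˢ range (n+1)).filter (fun q => ¬ q.1 + q.2 ≤ n),
      F q.1 q.2 = 0 := by
    apply Finset.sum_eq_zero
    intro q hq
    exact hF _ _ (by have := (Finset.mem_filter.1 hq).2; omega)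
  rw [h0, add_zero]
  apply Finset.sum_nbij' (i := fun σ => (σ.2.1, σ.2.2)) (j := fun p => ⟨p.1 + p.2, p⟩)
  · intro σ hσ
    rw [Finset.mem_sigma] at hσ
    obtain ⟨h1, h2⟩ := hσ
    rw [Finset.HasAntidiagonal.mem_antidiagonal] at h2
    rw [Finset.mem_filter, Finset.mem_product]
    rw [Finset.mem_range] at h1
    constructor
    · constructor <;> rw [Finset.mem_range] <;> omega
    · simp only []; omega
  · intro p hp
    rw [Finset.mem_filter, Finset.mem_product, Finset.mem_range, Finset.mem_range] at hp
    rw [Finset.mem_sigma, Finset.mem_range, Finset.HasAntidiagonal.mem_antidiagonal]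
    exact ⟨show p.1 + p.2 < n + 1 by omega, rfl⟩
  · intro σ hσ
    rw [Finset.mem_sigma, Finset.HasAntidiagonal.mem_antidiagonal] at hσ
    exact Sigma.ext (by simp [hσ.2]) (by simp)
  · intro p hp; rfl
  · intro σ hσ; rfl

noncomputable def Phi (B : ℚ⟦X⟧) : ℚ⟦X⟧ :=
  PowerSeries.mk fun n => ∑ m ∈ range (n+1), PowerSeries.coeff m B * PowerSeries.coeff n (Lf^m)

lemma coeff_Phi (B : ℚ⟦X⟧) (n N : ℕ) (h : n < N) :
    PowerSeries.coeff n (Phi B) = ∑ m ∈ range N, PowerSeries.coeff m B * PowerSeries.coeff n (Lf^m) := by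
  rw [Phi, PowerSeries.coeff_mk]
  apply Finset.sum_subset (by rw [Finset.range_subset_range]; omega)
  intro x hx hx'
  rw [Finset.mem_range] at hx'
  rw [coeff_Lf_pow_eq_zero (by omega), mul_zero]

lemma constantCoeff_Phi (B : ℚ⟦X⟧) :
    PowerSeries.constantCoeff (Phi B) = PowerSeries.constantCoeff B := by
  rw [← PowerSeries.coeff_zero_eq_constantCoeff, Phi, PowerSeries.coeff_mk]
  simp

lemma Phi_one : Phi 1 = 1 := by
  ext n
  rw [Phi, PowerSeries.coeff_mk]
  rw [Finset.sum_eq_single 0]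
  · simp
  · intro m _ hm
    rw [PowerSeries.coeff_one, if_neg hm, zero_mul]
  · intro h; exact absurd (Finset.mem_range.2 (by omega)) h

lemma Phi_mul (A B : ℚ⟦X⟧) : Phi (A*B) = Phi A * Phi B := by
  ext n
  have hT : PowerSeries.coeff n (Phi A * Phi B) = ∑ i ∈ range (n+1), ∑ j ∈ range (n+1),
      PowerSeries.coeff i A * PowerSeries.coeff j B * PowerSeries.coeff n (Lf^(i+j)) := by
    rw [PowerSeries.coeff_mul]
    have e1 : ∀ p ∈ antidiagonal n, PowerSeries.coeff p.1 (Phi A) * PowerSeries.coeff p.2 (Phi B)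
        = ∑ i ∈ range (n+1), ∑ j ∈ range (n+1), PowerSeries.coeff i A * PowerSeries.coeff j B *
            (PowerSeries.coeff p.1 (Lf^i) * PowerSeries.coeff p.2 (Lf^j)) := by
      intro p hp
      have h1 : p.1 < n+1 := by have := Finset.HasAntidiagonal.antidiagonal.fst_le hp; omega
      have h2 : p.2 < n+1 := by have := Finset.HasAntidiagonal.antidiagonal.snd_le hp; omega
      rw [coeff_Phi _ _ _ h1, coeff_Phi _ _ _ h2, Finset.sum_mul_sum]
      apply Finset.sum_congr rfl; intro i _
      apply Finset.sum_congr rfl; intro j _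
      ring
    rw [Finset.sum_congr rfl e1, Finset.sum_comm]
    apply Finset.sum_congr rfl; intro i _
    rw [Finset.sum_comm]
    apply Finset.sum_congr rfl; intro j _
    rw [pow_add, PowerSeries.coeff_mul, ← Finset.mul_sum]
  have hL : PowerSeries.coeff n (Phi (A*B)) = ∑ m ∈ range (n+1), ∑ q ∈ antidiagonal m,
      PowerSeries.coeff q.1 A * PowerSeries.coeff q.2 B * PowerSeries.coeff n (Lf^(q.1+q.2)) := by
    rw [Phi, PowerSeries.coeff_mk]
    apply Finset.sum_congr rfl; intro m _
    rw [PowerSeries.coeff_mul, Finset.sum_mul]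
    apply Finset.sum_congr rfl; intro q hq
    rw [Finset.HasAntidiagonal.mem_antidiagonal.mp hq]
  rw [hL, hT]
  exact sum_antidiag_range n
    (fun i j => PowerSeries.coeff i A * PowerSeries.coeff j B * PowerSeries.coeff n (Lf^(i+j)))
    (fun i j hij => by simp [coeff_Lf_pow_eq_zero hij])

lemma Phi_pow (U : ℚ⟦X⟧) (l : ℕ) : Phi (U^l) = (Phi U)^l := by
  induction l with
  | zero => simpa using Phi_one
  | succ l ih => rw [pow_succ, pow_succ, Phi_mul, ih]

noncomputable def Lg (U : ℚ⟦X⟧) : ℚ⟦X⟧ :=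
  PowerSeries.mk fun n => ∑ l ∈ range (n+1), PowerSeries.coeff l Lf * PowerSeries.coeff n (U^l)

lemma coeff_Lg (U : ℚ⟦X⟧) (hU : PowerSeries.constantCoeff U = 0) (n N : ℕ) (h : n < N) :
    PowerSeries.coeff n (Lg U) = ∑ l ∈ range N, PowerSeries.coeff l Lf * PowerSeries.coeff n (U^l) := by
  rw [Lg, PowerSeries.coeff_mk]
  apply Finset.sum_subset (by rw [Finset.range_subset_range]; omega)
  intro x hx hx'
  rw [Finset.mem_range] at hx'
  rw [coeff_pow_eq_zero hU (by omega), mul_zero]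

lemma Phi_Lg (U : ℚ⟦X⟧) (hU : PowerSeries.constantCoeff U = 0) : Phi (Lg U) = Lg (Phi U) := by
  ext n
  rw [Phi, PowerSeries.coeff_mk]
  have e1 : ∀ m ∈ range (n+1), PowerSeries.coeff m (Lg U) * PowerSeries.coeff n (Lf^m)
      = ∑ l ∈ range (n+1), PowerSeries.coeff l Lf * PowerSeries.coeff m (U^l) *
          PowerSeries.coeff n (Lf^m) := by
    intro m hm
    rw [coeff_Lg U hU m (n+1) (Finset.mem_range.1 hm), Finset.sum_mul]
  rw [Finset.sum_congr rfl e1, Finset.sum_comm, Lg, PowerSeries.coeff_mk]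
  apply Finset.sum_congr rfl; intro l _
  rw [← Phi_pow, Phi, PowerSeries.coeff_mk, Finset.mul_sum]
  apply Finset.sum_congr rfl; intro m _
  ring


lemma tnum_zero_left (j r : ℕ) (hr : 1 ≤ r) : tnum 0 j r = 0 := by
  cases j with
  | zero => rw [tnum]; simp; omega
  | succ j => rw [tnum, Finset.Icc_eq_empty (by omega)]; simp

noncomputable def Tser (j : ℕ) : ℚ⟦X⟧ :=
  PowerSeries.mk fun n => (tnum n j 1 : ℚ) / n.factorial

lemma constantCoeff_Tser (j : ℕ) : PowerSeries.constantCoeff (Tser j) = 0 := by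
  rw [← PowerSeries.coeff_zero_eq_constantCoeff, Tser, PowerSeries.coeff_mk,
    tnum_zero_left j 1 le_rfl]
  simp

lemma range_succ_eq_insert (n : ℕ) : range (n+1) = insert 0 (Finset.Icc 1 n) := by
  ext x
  simp only [Finset.mem_range, Finset.mem_insert, Finset.mem_Icc]
  omega

lemma Tser_succ (j : ℕ) : Tser (j+1) = Phi (Tser j) := by
  ext n
  rw [Tser, PowerSeries.coeff_mk, Phi, PowerSeries.coeff_mk]
  have e1 : ∀ m ∈ range (n+1),
      PowerSeries.coeff m (Tser j) * PowerSeries.coeff n (Lf^m)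
        = (stirS1 n m : ℚ) * (tnum m j 1 : ℚ) / n.factorial := by
    intro m hm
    have hf : (m.factorial : ℚ) ≠ 0 := Nat.cast_ne_zero.2 (Nat.factorial_ne_zero _)
    have hf2 : (n.factorial : ℚ) ≠ 0 := Nat.cast_ne_zero.2 (Nat.factorial_ne_zero _)
    have hc := coeff_Lf_pow m n
    rw [Tser, PowerSeries.coeff_mk]
    field_simp
    field_simp at hc
    linear_combination (tnum m j 1 : ℚ) * hc
  rw [Finset.sum_congr rfl e1, tnum]
  push_cast
  rw [Finset.sum_div]
  rw [range_succ_eq_insert, Finset.sum_insert (by simp)]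
  rw [tnum_zero_left j 1 le_rfl]
  simp

lemma Tser_one : Tser 1 = Lf := by
  ext n
  rw [Tser, PowerSeries.coeff_mk, Lf, PowerSeries.coeff_mk, tnum]
  have e1 : ∀ m ∈ Finset.Icc 1 n, stirS1 n m * tnum m 0 1
      = if m = 1 then stirS1 n 1 else 0 := by
    intro m hm
    rw [tnum]
    by_cases h : m = 1
    · subst h; simp
    · simp [h]
  rw [Finset.sum_congr rfl e1, Finset.sum_ite_eq' (Finset.Icc 1 n) 1 (fun _ => stirS1 n 1)]
  by_cases hn : 1 ≤ n
  · rw [if_pos (Finset.mem_Icc.2 ⟨le_rfl, hn⟩)]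
  · have hn0 : n = 0 := by omega
    subst hn0
    simp [stirS1_zero_left]

lemma Tser_log : ∀ j : ℕ, Tser (j+2) = Lg (Tser (j+1)) := by
  intro j
  induction j with
  | zero => rw [Tser_succ, Tser_one]; rfl
  | succ j ih =>
      calc Tser (j+1+2) = Phi (Tser (j+2)) := Tser_succ (j+2)
        _ = Phi (Lg (Tser (j+1))) := by rw [ih]
        _ = Lg (Phi (Tser (j+1))) := Phi_Lg _ (constantCoeff_Tser _)
        _ = Lg (Tser (j+1+1)) := by rw [← Tser_succ]

noncomputable def Dq (n : ℕ) (P : Nat.Partition n) : ℚ :=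
  ∏ j ∈ Finset.range (n + 1),
      ((j.factorial : ℚ) ^ (P.parts.count j) * ((P.parts.count j).factorial : ℚ))

lemma fPart_eq (n : ℕ) (P : Nat.Partition n) : fPart n P = n.factorial / Dq n P := rfl

lemma Dq_pos (n : ℕ) (P : Nat.Partition n) : 0 < Dq n P := by
  apply Finset.prod_pos
  intro j _
  have h1 : (0:ℚ) < (j.factorial : ℚ) := by exact_mod_cast j.factorial_pos
  have h2 : (0:ℚ) < ((P.parts.count j).factorial : ℚ) := by
    exact_mod_cast (P.parts.count j).factorial_pos
  positivity

lemma part_le {n : ℕ} (P : Nat.Partition n) {i : ℕ} (hi : i ∈ P.parts) : i ≤ n := by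
  conv_rhs => rw [← P.parts_sum]
  exact Multiset.single_le_sum (fun x _ => Nat.zero_le x) i hi

lemma count_eq_zero_of_big {n : ℕ} (P : Nat.Partition n) {i : ℕ} (hi : n < i) :
    P.parts.count i = 0 :=
  Multiset.count_eq_zero.2 fun h => absurd (part_le P h) (by omega)

lemma card_parts_le {n : ℕ} (P : Nat.Partition n) : Multiset.card P.parts ≤ n := by
  have h := Multiset.card_nsmul_le_sum (s := P.parts) (a := 1) (fun x hx => P.parts_pos hx)
  rw [P.parts_sum] at h
  simpa using h

lemma card_parts_pos {n : ℕ} (hn : 1 ≤ n) (P : Nat.Partition n) :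
    1 ≤ Multiset.card P.parts := by
  by_contra h
  have h0 : Multiset.card P.parts = 0 := by omega
  have hs := P.parts_sum
  rw [Multiset.card_eq_zero.1 h0] at hs
  simp at hs
  omega

lemma sum_count_parts {n : ℕ} (P : Nat.Partition n) :
    ∑ j ∈ range (n+1), P.parts.count j = Multiset.card P.parts := by
  rw [← Multiset.toFinset_sum_count_eq P.parts]
  symm
  apply Finset.sum_subset
  · intro x hx
    rw [Multiset.mem_toFinset] at hx
    rw [Finset.mem_range]
    have := part_le P hx
    omega
  · intro x _ hx
    rw [Multiset.mem_toFinset] at hx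
    exact Multiset.count_eq_zero.2 hx

def consPart {i : ℕ} (n j : ℕ) (hj1 : 1 ≤ j) (hij : i + j = n) (μ : Nat.Partition i) :
    Nat.Partition n where
  parts := j ::ₘ μ.parts
  parts_pos := by
    intro x hx
    rcases Multiset.mem_cons.1 hx with h | h
    · omega
    · exact μ.parts_pos h
  parts_sum := by rw [Multiset.sum_cons, μ.parts_sum]; omega

@[simp] lemma consPart_parts {i : ℕ} (n j : ℕ) (hj1 : 1 ≤ j) (hij : i + j = n)
    (μ : Nat.Partition i) : (consPart n j hj1 hij μ).parts = j ::ₘ μ.parts := rfl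

lemma Dq_consPart {i n j : ℕ} (hj1 : 1 ≤ j) (hij : i + j = n) (μ : Nat.Partition i) :
    Dq n (consPart n j hj1 hij μ)
      = Dq i μ * j.factorial * (μ.parts.count j + 1) := by
  have hDi : Dq i μ = ∏ m ∈ range (n+1),
      ((m.factorial : ℚ) ^ (μ.parts.count m) * ((μ.parts.count m).factorial : ℚ)) := by
    rw [Dq]
    apply Finset.prod_subset (Finset.range_subset_range.2 (by omega))
    intro x _ hx'
    rw [Finset.mem_range] at hx'
    rw [count_eq_zero_of_big μ (by omega)]
    simp
  rw [Dq, hDi]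
  have hj : j ∈ range (n+1) := Finset.mem_range.2 (by omega)
  rw [← Finset.mul_prod_erase _ _ hj, ← Finset.mul_prod_erase _ _ hj]
  have e1 : ∀ m ∈ (range (n+1)).erase j,
      ((m.factorial : ℚ) ^ ((consPart n j hj1 hij μ).parts.count m) *
        (((consPart n j hj1 hij μ).parts.count m).factorial : ℚ))
      = ((m.factorial : ℚ) ^ (μ.parts.count m) * ((μ.parts.count m).factorial : ℚ)) := by
    intro m hm
    have hne : m ≠ j := (Finset.mem_erase.1 hm).1
    rw [consPart_parts, Multiset.count_cons_of_ne hne]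
  rw [Finset.prod_congr rfl e1, consPart_parts, Multiset.count_cons_self,
    Nat.factorial_succ]
  push_cast
  ring

lemma choose_mul_fPart {i n j : ℕ} (hj1 : 1 ≤ j) (hij : i + j = n) (μ : Nat.Partition i) :
    (n.choose j : ℚ) * fPart i μ
      = fPart n (consPart n j hj1 hij μ) * (μ.parts.count j + 1) := by
  rw [fPart_eq, fPart_eq, Dq_consPart hj1 hij]
  have h1 : Dq i μ ≠ 0 := ne_of_gt (Dq_pos _ _)
  have h2 : (j.factorial : ℚ) ≠ 0 := Nat.cast_ne_zero.2 (Nat.factorial_ne_zero _)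
  have h3 : ((μ.parts.count j : ℚ) + 1) ≠ 0 := by positivity
  have hni : n - j = i := by omega
  have hch : (n.choose j : ℚ) * j.factorial * i.factorial = n.factorial := by
    have := Nat.choose_mul_factorial_mul_factorial (show j ≤ n by omega)
    rw [hni] at this
    exact_mod_cast congrArg (Nat.cast : ℕ → ℚ) this
  field_simp
  linear_combination hch

lemma sum_antidiagonal_snd (h : ℕ → ℚ) (n : ℕ) :
    ∑ p ∈ Finset.HasAntidiagonal.antidiagonal n, h p.2 = ∑ j ∈ range (n+1), h j := by
  rw [Finset.Nat.sum_antidiagonal_eq_sum_range_succ_mk]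
  simpa using Finset.sum_range_reflect h (n+1)

lemma partition_inner_sum (a : ℕ → ℚ) {i n j : ℕ} (l : ℕ) (hj1 : 1 ≤ j) (hij : i + j = n) :
    (n.choose j : ℚ) * a j *
        ∑ μ ∈ univ.filter (fun μ : Nat.Partition i => Multiset.card μ.parts = l),
          fPart i μ * ((μ.parts.map a).prod)
      = ∑ P ∈ univ.filter (fun P : Nat.Partition n => Multiset.card P.parts = l + 1),
          (P.parts.count j : ℚ) * (fPart n P * ((P.parts.map a).prod)) := by
  have hzero : ∀ P ∈ univ.filter (fun P : Nat.Partition n => Multiset.card P.parts = l+1),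
      P ∉ univ.filter (fun P : Nat.Partition n =>
        Multiset.card P.parts = l+1 ∧ j ∈ P.parts) →
      (P.parts.count j : ℚ) * (fPart n P * ((P.parts.map a).prod)) = 0 := by
    intro P hP hP'
    have hnm : j ∉ P.parts := by
      intro hj
      exact hP' (Finset.mem_filter.2 ⟨Finset.mem_univ _, (Finset.mem_filter.1 hP).2, hj⟩)
    rw [Multiset.count_eq_zero.2 hnm]
    simp
  rw [← Finset.sum_subset
    (fun P hP => Finset.mem_filter.2 ⟨Finset.mem_univ _, (Finset.mem_filter.1 hP).2.1⟩) hzero]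
  rw [Finset.mul_sum]
  refine Finset.sum_bij' (fun μ _ => consPart n j hj1 hij μ)
    (fun P hP => ⟨P.parts.erase j,
      fun hx => P.parts_pos (Multiset.mem_of_mem_erase hx), ?_⟩) ?_ ?_ ?_ ?_ ?_
  · -- sum of erased parts
    have hjP : j ∈ P.parts := (Finset.mem_filter.1 hP).2.2
    have h1 := congrArg Multiset.sum (Multiset.cons_erase hjP)
    rw [Multiset.sum_cons, P.parts_sum] at h1
    omega
  · -- hi : consPart lands in target filter
    intro μ hμ
    have hcard := (Finset.mem_filter.1 hμ).2
    refine Finset.mem_filter.2 ⟨Finset.mem_univ _, ?_, ?_⟩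
    · rw [consPart_parts, Multiset.card_cons, hcard]
    · rw [consPart_parts]; exact Multiset.mem_cons_self _ _
  · -- hj : erase lands in source filter
    intro P hP
    refine Finset.mem_filter.2 ⟨Finset.mem_univ _, ?_⟩
    have hjP : j ∈ P.parts := (Finset.mem_filter.1 hP).2.2
    have hcard := (Finset.mem_filter.1 hP).2.1
    simp only [Multiset.card_erase_of_mem hjP, hcard]
    rfl
  · -- left inverse
    intro μ hμ
    apply Nat.Partition.ext
    simp only [consPart_parts]
    exact Multiset.erase_cons_head _ _
  · -- right inverse
    intro P hP
    apply Nat.Partition.ext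
    simp only [consPart_parts]
    exact Multiset.cons_erase (Finset.mem_filter.1 hP).2.2
  · -- terms agree
    intro μ hμ
    rw [consPart_parts, Multiset.count_cons_self, Multiset.map_cons, Multiset.prod_cons]
    have hc := choose_mul_fPart hj1 hij μ
    push_cast
    linear_combination (a j * (Multiset.map a μ.parts).prod) * hc


lemma key_partition (a : ℕ → ℚ) (ha : a 0 = 0) : ∀ l n : ℕ,
    (l.factorial : ℚ) *
      ∑ P ∈ univ.filter (fun P : Nat.Partition n => Multiset.card P.parts = l),
        fPart n P * ((P.parts.map a).prod)
    = (n.factorial : ℚ) *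
        PowerSeries.coeff n ((PowerSeries.mk fun m => a m / m.factorial)^l) := by
  intro l
  induction l with
  | zero =>
      intro n
      rw [pow_zero]
      cases n with
      | zero =>
          rw [PowerSeries.coeff_zero_eq_constantCoeff, map_one]
          have huniv : (univ.filter (fun P : Nat.Partition 0 => Multiset.card P.parts = 0))
              = univ := Finset.filter_true_of_mem (fun P _ => by simp)
          rw [huniv]
          have h0 : ∀ P : Nat.Partition 0, fPart 0 P * ((P.parts.map a).prod) = 1 := by
            intro P
            rw [fPart_eq]
            simp [Dq]
          rw [Finset.sum_congr rfl fun P _ => h0 P]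
          simp
      | succ n =>
          rw [PowerSeries.coeff_one, if_neg (Nat.succ_ne_zero n), mul_zero]
          rw [Finset.sum_eq_zero, mul_zero]
          intro P hP
          have hcard := (Finset.mem_filter.1 hP).2
          have hP0 : P.parts = 0 := Multiset.card_eq_zero.1 hcard
          have hs := P.parts_sum
          rw [hP0] at hs
          simp at hs
  | succ l ih =>
      intro n
      symm
      rw [pow_succ, PowerSeries.coeff_mul, Finset.mul_sum]
      have e2 : ∀ p ∈ Finset.HasAntidiagonal.antidiagonal n,
          (n.factorial : ℚ) * (PowerSeries.coeff p.1 ((PowerSeries.mk fun m => a m / m.factorial)^l)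
              * PowerSeries.coeff p.2 (PowerSeries.mk fun m => a m / m.factorial))
            = (l.factorial : ℚ) *
              ∑ P ∈ univ.filter (fun P : Nat.Partition n => Multiset.card P.parts = l + 1),
                (P.parts.count p.2 : ℚ) * (fPart n P * ((P.parts.map a).prod)) := by
        intro p hp
        have hpn : p.1 + p.2 = n := Finset.HasAntidiagonal.mem_antidiagonal.1 hp
        have hcoeffA : PowerSeries.coeff p.2 (PowerSeries.mk fun m => a m / m.factorial)
            = a p.2 / p.2.factorial := PowerSeries.coeff_mk _ _
        rcases Nat.eq_zero_or_pos p.2 with h0 | hpos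
        · rw [hcoeffA, h0, ha]
          rw [Finset.sum_eq_zero, mul_zero]
          · simp
          · intro P hP
            have hc0 : P.parts.count 0 = 0 :=
              Multiset.count_eq_zero.2 fun h => lt_irrefl 0 (P.parts_pos h)
            rw [hc0]
            simp
        · have hin := partition_inner_sum a l hpos hpn
          rw [← hin, hcoeffA]
          have hih := ih p.1
          have hch : (n.choose p.2 : ℚ) * p.2.factorial * p.1.factorial = n.factorial := by
            have h1 := Nat.choose_mul_factorial_mul_factorial (show p.2 ≤ n by omega)
            have h2 : n - p.2 = p.1 := by omega
            rw [h2] at h1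
            exact_mod_cast congrArg (Nat.cast : ℕ → ℚ) h1
          have hf2 : (p.2.factorial : ℚ) ≠ 0 := Nat.cast_ne_zero.2 (Nat.factorial_ne_zero _)
          field_simp
          linear_combination (-(a p.2) * (n.choose p.2 : ℚ) * (p.2.factorial : ℚ)) * hih
            - a p.2 * (PowerSeries.coeff p.1
                ((PowerSeries.mk fun m => a m / (m.factorial:ℚ)) ^ l)) * hch
      rw [Finset.sum_congr rfl e2, ← Finset.mul_sum]
      rw [sum_antidiagonal_snd (fun j =>
        ∑ P ∈ univ.filter (fun P : Nat.Partition n => Multiset.card P.parts = l + 1),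
          (P.parts.count j : ℚ) * (fPart n P * ((P.parts.map a).prod))) n]
      rw [Finset.sum_comm]
      have e3 : ∀ P ∈ univ.filter (fun P : Nat.Partition n => Multiset.card P.parts = l + 1),
          ∑ j ∈ range (n+1), (P.parts.count j : ℚ) * (fPart n P * ((P.parts.map a).prod))
            = ((l:ℚ)+1) * (fPart n P * ((P.parts.map a).prod)) := by
        intro P hP
        rw [← Finset.sum_mul]
        have hc : (∑ j ∈ range (n+1), (P.parts.count j : ℚ)) = ((l:ℚ)+1) := by
          rw [← Nat.cast_sum, sum_count_parts P, (Finset.mem_filter.1 hP).2]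
          push_cast
          ring
        rw [hc]
      rw [Finset.sum_congr rfl e3, ← Finset.mul_sum, Nat.factorial_succ]
      push_cast
      ring

/-- For `n ≥ 1`, `k ≥ 2`:
`t(n,k,1) = ∑_{λ ⊢ n} (-1)^{l(λ)+1} g_λ ∏_{i=1}^{l(λ)} t(λ_i, k-1, 1)`,
the sum being over all integer partitions `λ` of `n`. -/
theorem t_one_recurrence (n k : ℕ) (hn : 1 ≤ n) (hk : 2 ≤ k) :
    (tnum n k 1 : ℚ) =
      ∑ P : Nat.Partition n,
        (-1 : ℚ) ^ (Multiset.card P.parts + 1) * gPart n P *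
          (P.parts.map fun i => (tnum i (k - 1) 1 : ℚ)).prod := by
  obtain ⟨j, rfl⟩ : ∃ j, k = j + 2 := ⟨k - 2, by omega⟩
  have hk1 : j + 2 - 1 = j + 1 := rfl
  rw [hk1]
  set a : ℕ → ℚ := fun i => (tnum i (j+1) 1 : ℚ) with haa
  have ha : a 0 = 0 := by
    have := tnum_zero_left (j+1) 1 le_rfl
    simp only [haa, this, Int.cast_zero]
  have hfn : (n.factorial : ℚ) ≠ 0 := Nat.cast_ne_zero.2 (Nat.factorial_ne_zero _)
  have hL : ((tnum n (j+2) 1 : ℤ) : ℚ)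
      = (n.factorial : ℚ) * PowerSeries.coeff n (Tser (j+2)) := by
    rw [Tser, PowerSeries.coeff_mk]
    field_simp
  rw [hL, Tser_log j, Lg, PowerSeries.coeff_mk, Finset.mul_sum]
  rw [← Finset.sum_fiberwise_of_maps_to (g := fun P : Nat.Partition n => Multiset.card P.parts)
      (t := range (n+1))
      (fun P _ => Finset.mem_range.2 (show Multiset.card P.parts < n + 1 by have := card_parts_le P; omega))]
  apply Finset.sum_congr rfl
  intro l hl
  have hAT : (PowerSeries.mk fun m => a m / m.factorial) = Tser (j+1) := rfl
  cases l with
  | zero =>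
      have hLf0 : PowerSeries.coeff 0 Lf = 0 := by
        rw [Lf, PowerSeries.coeff_mk, stirS1_zero_left]
        simp
      rw [hLf0, zero_mul, mul_zero]
      symm
      apply Finset.sum_eq_zero
      intro P hP
      have h1 : Multiset.card P.parts = 0 := (Finset.mem_filter.1 hP).2
      have h2 := card_parts_pos hn P
      omega
  | succ m =>
      have hkey := key_partition a ha (m+1) n
      rw [hAT] at hkey
      have eR : ∀ P ∈ univ.filter
          (fun P : Nat.Partition n => Multiset.card P.parts = m + 1),
          (-1 : ℚ) ^ (Multiset.card P.parts + 1) * gPart n P * ((P.parts.map a).prod)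
            = ((-1:ℚ)^m * m.factorial) * (fPart n P * ((P.parts.map a).prod)) := by
        intro P hP
        have hc := (Finset.mem_filter.1 hP).2
        rw [gPart, hc]
        simp only [Nat.add_sub_cancel]
        rw [pow_succ, pow_succ]
        ring
      rw [Finset.sum_congr rfl eR, ← Finset.mul_sum]
      have hLfc : PowerSeries.coeff (m+1) Lf = ((-1:ℚ)^m * m.factorial) / (m+1).factorial := by
        rw [Lf, PowerSeries.coeff_mk]
        have := stirS1_one m
        rw [this]
        push_cast
        ring
      rw [hLfc]
      have hfm : ((m+1).factorial : ℚ) ≠ 0 := Nat.cast_ne_zero.2 (Nat.factorial_ne_zero _)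
      field_simp
      linear_combination (-1:ℚ) * hkey
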